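/- If a complex antisymmetric rank-2 tensor L on Minkowski space is an eigenvector of the Hodge star, i.e. *L = λL for some λ ∈ ℂ, then the real antisymmetric tensors Re L and Im L commute: [Re L, Im L] = 0. -/
import Mathlib


noncomputable section
open Complex Finset

/-- The Minkowski metric `diag(+1,-1,-1,-1)` on `ℝ⁴`. -/
def gR (μ ν : Fin 4) : ℝ := if μ = ν then (if μ = (0 : Fin 4) then 1 else -1) else 0

/-- The value of an index as a real number. -/
def fv (a : Fin 4) : ℝ := (a : ℕ)

/-- The totally antisymmetric symbol `ε` with `ε₀₁₂₃ = +1`. -/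
def eps (a b c d : Fin 4) : ℝ :=
  ((fv b - fv a) * (fv c - fv a) * (fv d - fv a) *
    (fv c - fv b) * (fv d - fv b) * (fv d - fv c)) / 12

/-- The Hodge star of an antisymmetric rank-2 (lower-index) tensor:
`(*L)_{μν} = (1/2) L^{κλ} ε_{κλμν}`, indices raised with the Minkowski metric. -/
def hodge (L : Fin 4 → Fin 4 → ℂ) (μ ν : Fin 4) : ℂ :=
  (1/2) * ∑ κ : Fin 4, ∑ l : Fin 4, ((gR κ κ * gR l l * eps κ l μ ν : ℝ) : ℂ) * L κ l

/-- The commutator `[L,N]` of rank-2 tensors, with the contracted index raised by the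
Minkowski metric, and the free raised index lowered again:
`[L,N]_{τλ} = L_{τκ} g^{κκ} N_{κλ} − N_{τκ} g^{κκ} L_{κλ}`. -/
def commT (L N : Fin 4 → Fin 4 → ℂ) (τ lam : Fin 4) : ℂ :=
  ∑ κ : Fin 4, ((gR κ κ : ℝ) : ℂ) * (L τ κ * N κ lam - N τ κ * L κ lam)

lemma fv0 : fv 0 = 0 := by norm_num [fv, show ((0:Fin 4):ℕ) = 0 from rfl]
lemma fv1 : fv 1 = 1 := by norm_num [fv, show ((1:Fin 4):ℕ) = 1 from rfl]
lemma fv2 : fv 2 = 2 := by norm_num [fv, show ((2:Fin 4):ℕ) = 2 from rfl]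
lemma fv3 : fv 3 = 3 := by norm_num [fv, show ((3:Fin 4):ℕ) = 3 from rfl]
lemma g00 : gR 0 0 = 1 := rfl
lemma g11 : gR 1 1 = -1 := rfl
lemma g22 : gR 2 2 = -1 := rfl
lemma g33 : gR 3 3 = -1 := rfl
lemma hodgeE00 (F : Fin 4 → Fin 4 → ℂ) (hF : ∀ μ ν, F μ ν = - F ν μ) :
    hodge F 0 0 = 0 := by
  simp only [hodge, Fin.sum_univ_four]
  norm_num [eps, fv0, fv1, fv2, fv3, g00, g11, g22, g33]
  try ring

lemma hodgeE01 (F : Fin 4 → Fin 4 → ℂ) (hF : ∀ μ ν, F μ ν = - F ν μ) :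
    hodge F 0 1 = F 2 3 := by
  simp only [hodge, Fin.sum_univ_four]
  norm_num [eps, fv0, fv1, fv2, fv3, g00, g11, g22, g33, hF 3 2]
  try ring

lemma hodgeE02 (F : Fin 4 → Fin 4 → ℂ) (hF : ∀ μ ν, F μ ν = - F ν μ) :
    hodge F 0 2 = -(F 1 3) := by
  simp only [hodge, Fin.sum_univ_four]
  norm_num [eps, fv0, fv1, fv2, fv3, g00, g11, g22, g33, hF 3 1]
  try ring

lemma hodgeE03 (F : Fin 4 → Fin 4 → ℂ) (hF : ∀ μ ν, F μ ν = - F ν μ) :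
    hodge F 0 3 = F 1 2 := by
  simp only [hodge, Fin.sum_univ_four]
  norm_num [eps, fv0, fv1, fv2, fv3, g00, g11, g22, g33, hF 2 1]
  try ring

lemma hodgeE10 (F : Fin 4 → Fin 4 → ℂ) (hF : ∀ μ ν, F μ ν = - F ν μ) :
    hodge F 1 0 = -(F 2 3) := by
  simp only [hodge, Fin.sum_univ_four]
  norm_num [eps, fv0, fv1, fv2, fv3, g00, g11, g22, g33, hF 3 2]
  try ring

lemma hodgeE11 (F : Fin 4 → Fin 4 → ℂ) (hF : ∀ μ ν, F μ ν = - F ν μ) :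
    hodge F 1 1 = 0 := by
  simp only [hodge, Fin.sum_univ_four]
  norm_num [eps, fv0, fv1, fv2, fv3, g00, g11, g22, g33]
  try ring

lemma hodgeE12 (F : Fin 4 → Fin 4 → ℂ) (hF : ∀ μ ν, F μ ν = - F ν μ) :
    hodge F 1 2 = -(F 0 3) := by
  simp only [hodge, Fin.sum_univ_four]
  norm_num [eps, fv0, fv1, fv2, fv3, g00, g11, g22, g33, hF 3 0]
  try ring

lemma hodgeE13 (F : Fin 4 → Fin 4 → ℂ) (hF : ∀ μ ν, F μ ν = - F ν μ) :
    hodge F 1 3 = F 0 2 := by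
  simp only [hodge, Fin.sum_univ_four]
  norm_num [eps, fv0, fv1, fv2, fv3, g00, g11, g22, g33, hF 2 0]
  try ring

lemma hodgeE20 (F : Fin 4 → Fin 4 → ℂ) (hF : ∀ μ ν, F μ ν = - F ν μ) :
    hodge F 2 0 = F 1 3 := by
  simp only [hodge, Fin.sum_univ_four]
  norm_num [eps, fv0, fv1, fv2, fv3, g00, g11, g22, g33, hF 3 1]
  try ring

lemma hodgeE21 (F : Fin 4 → Fin 4 → ℂ) (hF : ∀ μ ν, F μ ν = - F ν μ) :
    hodge F 2 1 = F 0 3 := by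
  simp only [hodge, Fin.sum_univ_four]
  norm_num [eps, fv0, fv1, fv2, fv3, g00, g11, g22, g33, hF 3 0]
  try ring

lemma hodgeE22 (F : Fin 4 → Fin 4 → ℂ) (hF : ∀ μ ν, F μ ν = - F ν μ) :
    hodge F 2 2 = 0 := by
  simp only [hodge, Fin.sum_univ_four]
  norm_num [eps, fv0, fv1, fv2, fv3, g00, g11, g22, g33]
  try ring

lemma hodgeE23 (F : Fin 4 → Fin 4 → ℂ) (hF : ∀ μ ν, F μ ν = - F ν μ) :
    hodge F 2 3 = -(F 0 1) := by
  simp only [hodge, Fin.sum_univ_four]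
  norm_num [eps, fv0, fv1, fv2, fv3, g00, g11, g22, g33, hF 1 0]
  try ring

lemma hodgeE30 (F : Fin 4 → Fin 4 → ℂ) (hF : ∀ μ ν, F μ ν = - F ν μ) :
    hodge F 3 0 = -(F 1 2) := by
  simp only [hodge, Fin.sum_univ_four]
  norm_num [eps, fv0, fv1, fv2, fv3, g00, g11, g22, g33, hF 2 1]
  try ring

lemma hodgeE31 (F : Fin 4 → Fin 4 → ℂ) (hF : ∀ μ ν, F μ ν = - F ν μ) :
    hodge F 3 1 = -(F 0 2) := by
  simp only [hodge, Fin.sum_univ_four]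
  norm_num [eps, fv0, fv1, fv2, fv3, g00, g11, g22, g33, hF 2 0]
  try ring

lemma hodgeE32 (F : Fin 4 → Fin 4 → ℂ) (hF : ∀ μ ν, F μ ν = - F ν μ) :
    hodge F 3 2 = F 0 1 := by
  simp only [hodge, Fin.sum_univ_four]
  norm_num [eps, fv0, fv1, fv2, fv3, g00, g11, g22, g33, hF 1 0]
  try ring

lemma hodgeE33 (F : Fin 4 → Fin 4 → ℂ) (hF : ∀ μ ν, F μ ν = - F ν μ) :
    hodge F 3 3 = 0 := by
  simp only [hodge, Fin.sum_univ_four]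
  norm_num [eps, fv0, fv1, fv2, fv3, g00, g11, g22, g33]
  try ring

/-- Key identity: `[F, *F] = 0` for antisymmetric `F`. -/
lemma comm_hodge_self (F : Fin 4 → Fin 4 → ℂ) (hF : ∀ μ ν, F μ ν = - F ν μ)
    (τ ρ : Fin 4) : commT F (fun μ ν => hodge F μ ν) τ ρ = 0 := by
  have hE00 := hodgeE00 F hF
  have hE01 := hodgeE01 F hF
  have hE02 := hodgeE02 F hF
  have hE03 := hodgeE03 F hF
  have hE10 := hodgeE10 F hF
  have hE11 := hodgeE11 F hF
  have hE12 := hodgeE12 F hF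
  have hE13 := hodgeE13 F hF
  have hE20 := hodgeE20 F hF
  have hE21 := hodgeE21 F hF
  have hE22 := hodgeE22 F hF
  have hE23 := hodgeE23 F hF
  have hE30 := hodgeE30 F hF
  have hE31 := hodgeE31 F hF
  have hE32 := hodgeE32 F hF
  have hE33 := hodgeE33 F hF
  have a10 : F 1 0 = - F 0 1 := hF 1 0
  have a20 : F 2 0 = - F 0 2 := hF 2 0
  have a21 : F 2 1 = - F 1 2 := hF 2 1
  have a30 : F 3 0 = - F 0 3 := hF 3 0
  have a31 : F 3 1 = - F 1 3 := hF 3 1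
  have a32 : F 3 2 = - F 2 3 := hF 3 2
  have d0 : F 0 0 = 0 := by linear_combination (1/2 : ℂ) * hF 0 0
  have d1 : F 1 1 = 0 := by linear_combination (1/2 : ℂ) * hF 1 1
  have d2 : F 2 2 = 0 := by linear_combination (1/2 : ℂ) * hF 2 2
  have d3 : F 3 3 = 0 := by linear_combination (1/2 : ℂ) * hF 3 3
  have cases4 : ∀ x : Fin 4, x = 0 ∨ x = 1 ∨ x = 2 ∨ x = 3 := by decide
  rcases cases4 τ with rfl | rfl | rfl | rfl <;> rcases cases4 ρ with rfl | rfl | rfl | rfl <;>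
    · simp only [commT, Fin.sum_univ_four, Fin.isValue, hE00, hE01, hE02, hE03, hE10, hE11, hE12, hE13, hE20, hE21, hE22, hE23, hE30, hE31, hE32, hE33,
        a10, a20, a30, a21, a31, a32, d0, d1, d2, d3, g00, g11, g22, g33]
      push_cast
      ring

lemma hodge_real_im (f : Fin 4 → Fin 4 → ℝ) (μ ν : Fin 4) :
    (hodge (fun a b => ((f a b : ℝ) : ℂ)) μ ν).im = 0 := by
  simp [hodge, Fin.sum_univ_four, Complex.add_im, Complex.mul_im]

lemma hodge_add_mulI (f g : Fin 4 → Fin 4 → ℝ) (L : Fin 4 → Fin 4 → ℂ)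
    (h : ∀ a b, L a b = ((f a b : ℝ) : ℂ) + ((g a b : ℝ) : ℂ) * I) (μ ν : Fin 4) :
    hodge L μ ν = hodge (fun a b => ((f a b : ℝ) : ℂ)) μ ν
      + I * hodge (fun a b => ((g a b : ℝ) : ℂ)) μ ν := by
  simp only [hodge, Fin.sum_univ_four, h]
  ring

/-- if a complex antisymmetric rank-2 tensor `L` on Minkowski space is an
eigenvector of the Hodge star, `*L = λ L`, then `[Re L, Im L] = 0`. -/
theorem re_im_commute_of_hodge_eigenvector (L : Fin 4 → Fin 4 → ℂ)
    (hL : ∀ μ ν, L μ ν = - L ν μ) (lam : ℂ)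
    (heig : ∀ μ ν, hodge L μ ν = lam * L μ ν) :
    ∀ τ ρ, commT (fun μ ν => (((L μ ν).re : ℝ) : ℂ)) (fun μ ν => (((L μ ν).im : ℝ) : ℂ)) τ ρ = 0 := by
  intro τ ρ
  have r1 : L 2 3 = lam * L 0 1 := (hodgeE01 L hL).symm.trans (heig 0 1)
  have r2 : -(L 0 1) = lam * L 2 3 := (hodgeE23 L hL).symm.trans (heig 2 3)
  have r3 : -(L 1 3) = lam * L 0 2 := (hodgeE02 L hL).symm.trans (heig 0 2)
  have r4 : L 0 2 = lam * L 1 3 := (hodgeE13 L hL).symm.trans (heig 1 3)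
  have r5 : L 1 2 = lam * L 0 3 := (hodgeE03 L hL).symm.trans (heig 0 3)
  have r6 : -(L 0 3) = lam * L 1 2 := (hodgeE12 L hL).symm.trans (heig 1 2)
  by_cases hlam : lam ^ 2 = -1
  · -- eigenvalue is ±I
    have hfac : (lam - I) * (lam + I) = 0 := by
      have hI : I ^ 2 = -1 := Complex.I_sq
      linear_combination hlam - hI
    have hFanti : ∀ μ ν : Fin 4,
        (((L μ ν).re : ℝ) : ℂ) = -(((L ν μ).re : ℝ) : ℂ) := by
      intro μ ν; rw [hL μ ν]; push_cast [Complex.neg_re]; ring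
    have hsplit : ∀ μ ν, hodge L μ ν
        = hodge (fun a b => (((L a b).re : ℝ) : ℂ)) μ ν
          + I * hodge (fun a b => (((L a b).im : ℝ) : ℂ)) μ ν :=
      hodge_add_mulI (fun a b => (L a b).re) (fun a b => (L a b).im) L
        (fun a b => (Complex.re_add_im (L a b)).symm)
    have hc := comm_hodge_self (fun a b => (((L a b).re : ℝ) : ℂ)) hFanti τ ρ
    simp only [commT, Fin.sum_univ_four] at hc ⊢
    rcases mul_eq_zero.mp hfac with h | h
    · have hlamI : lam = I := by linear_combination h
      have key : ∀ μ ν, (((L μ ν).im : ℝ) : ℂ)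
          = -(hodge (fun a b => (((L a b).re : ℝ) : ℂ)) μ ν) := by
        intro μ ν
        have h1 := heig μ ν
        rw [hsplit μ ν, hlamI] at h1
        have hFim : (hodge (fun a b => (((L a b).re : ℝ) : ℂ)) μ ν).im = 0 :=
          hodge_real_im _ μ ν
        have hGim : (hodge (fun a b => (((L a b).im : ℝ) : ℂ)) μ ν).im = 0 :=
          hodge_real_im _ μ ν
        have h2 := congrArg Complex.re h1
        simp [Complex.add_re, Complex.mul_re, Complex.I_re, Complex.I_im, hFim, hGim] at h2
        apply Complex.ext
        · rw [Complex.ofReal_re, Complex.neg_re]; linarith [h2]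
        · rw [Complex.ofReal_im, Complex.neg_im, hFim]; norm_num
      simp only [key]
      linear_combination -hc
    · have hlamI : lam = -I := by linear_combination h
      have key : ∀ μ ν, (((L μ ν).im : ℝ) : ℂ)
          = hodge (fun a b => (((L a b).re : ℝ) : ℂ)) μ ν := by
        intro μ ν
        have h1 := heig μ ν
        rw [hsplit μ ν, hlamI] at h1
        have hFim : (hodge (fun a b => (((L a b).re : ℝ) : ℂ)) μ ν).im = 0 :=
          hodge_real_im _ μ ν
        have hGim : (hodge (fun a b => (((L a b).im : ℝ) : ℂ)) μ ν).im = 0 :=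
          hodge_real_im _ μ ν
        have h2 := congrArg Complex.re h1
        simp [Complex.add_re, Complex.mul_re, Complex.I_re, Complex.I_im, hFim, hGim] at h2
        apply Complex.ext
        · rw [Complex.ofReal_re]; linarith [h2]
        · rw [Complex.ofReal_im, hFim]
      simp only [key]
      linear_combination hc
  · -- then L = 0
    have hne : 1 + lam ^ 2 ≠ 0 := fun h => hlam (by linear_combination h)
    have z01 : L 0 1 = 0 := by
      have h : (1 + lam ^ 2) * L 0 1 = 0 := by linear_combination -r2 - lam * r1
      exact (mul_eq_zero.mp h).resolve_left hne
    have z02 : L 0 2 = 0 := by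
      have h : (1 + lam ^ 2) * L 0 2 = 0 := by linear_combination r4 - lam * r3
      exact (mul_eq_zero.mp h).resolve_left hne
    have z03 : L 0 3 = 0 := by
      have h : (1 + lam ^ 2) * L 0 3 = 0 := by linear_combination -r6 - lam * r5
      exact (mul_eq_zero.mp h).resolve_left hne
    have z23 : L 2 3 = 0 := by rw [r1, z01, mul_zero]
    have z13 : L 1 3 = 0 := by
      have h := r3; rw [z02, mul_zero] at h; linear_combination -h
    have z12 : L 1 2 = 0 := by rw [r5, z03, mul_zero]
    have hzero : ∀ μ ν, L μ ν = 0 := by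
      have cases4 : ∀ x : Fin 4, x = 0 ∨ x = 1 ∨ x = 2 ∨ x = 3 := by decide
      intro μ ν
      rcases cases4 μ with rfl | rfl | rfl | rfl <;> rcases cases4 ν with rfl | rfl | rfl | rfl <;>
        first
          | exact z01 | exact z02 | exact z03 | exact z12 | exact z13 | exact z23
          | linear_combination (1/2 : ℂ) * hL 0 0
          | linear_combination (1/2 : ℂ) * hL 1 1
          | linear_combination (1/2 : ℂ) * hL 2 2
          | linear_combination (1/2 : ℂ) * hL 3 3
          | linear_combination hL 1 0 - z01
          | linear_combination hL 2 0 - z02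
          | linear_combination hL 3 0 - z03
          | linear_combination hL 2 1 - z12
          | linear_combination hL 3 1 - z13
          | linear_combination hL 3 2 - z23
    simp [commT, hzero]
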